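/- Suppose the factor graph admits a valid solution x* and the priors satisfy the sufficient initialization for x*. Then after the first iteration, for every variable v ∈ V, the marginals satisfy r^{(1)}_v(x*_v) > r^{(1)}_v(1 − x*_v); i.e., the BP decision after one iteration equals x*_v for every v ∈ V. -/

import Mathlib

open Finset

/-- A factor graph: finite variable index set `V`, finite factor index set `𝒥`,
a nonempty neighborhood `nbhd J ⊆ V` for each factor `J`, every variable belonging
to at least one factor, and a `{0,1}`-valued factor function `g J` on `{0,1}^{V_J}`. -/
structure FactorGraph (V 𝒥 : Type) [Fintype V] [DecidableEq V] [Fintype 𝒥] [DecidableEq 𝒥] where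
  nbhd : 𝒥 → Finset V
  nbhd_nonempty : ∀ J : 𝒥, (nbhd J).Nonempty
  facs_nonempty : ∀ v : V, ∃ J : 𝒥, v ∈ nbhd J
  g : (J : 𝒥) → ({y // y ∈ nbhd J} → Bool) → Bool

variable {V 𝒥 : Type} [Fintype V] [DecidableEq V] [Fintype 𝒥] [DecidableEq 𝒥]

/-- `𝒥_v`: the set of factors adjacent to variable `v`. -/
def FactorGraph.Jset (FG : FactorGraph V 𝒥) (v : V) : Finset 𝒥 :=
  univ.filter fun J => v ∈ FG.nbhd J

/-- Restriction of a global assignment to the neighborhood of factor `J`. -/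
def FactorGraph.restrict (FG : FactorGraph V 𝒥) (x : V → Bool) (J : 𝒥) :
    {y // y ∈ FG.nbhd J} → Bool :=
  fun y => x y.1

/-- `x` is a valid solution if every factor evaluates to `1` on it. -/
def FactorGraph.ValidSolution (FG : FactorGraph V 𝒥) (x : V → Bool) : Prop :=
  ∀ J : 𝒥, FG.g J (FG.restrict x J) = true

/-- `κ_v = max_{J ∈ 𝒥_v} |{z ∈ {0,1}^{V_J} : g_J(z) = 1}|`. -/
def FactorGraph.kappa (FG : FactorGraph V 𝒥) (v : V) : ℕ :=
  (FG.Jset v).sup fun J =>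
    ((univ : Finset ({y // y ∈ FG.nbhd J} → Bool)).filter fun z => FG.g J z = true).card

/-- `ε_v = 1 / (1 + κ_v ^ |𝒥_v|)`. -/
noncomputable def FactorGraph.eps (FG : FactorGraph V 𝒥) (v : V) : ℝ :=
  1 / (1 + (FG.kappa v : ℝ) ^ (FG.Jset v).card)

/-- Priors: `P_v(0) = q_v`, `P_v(1) = 1 - q_v`. -/
def prior (q : V → ℝ) (v : V) (x : Bool) : ℝ :=
  if x then 1 - q v else q v

/-- A run of loopy belief propagation on the factor graph `FG` with priors `q`:
messages `mVF` (variable-to-factor) and `mFV` (factor-to-variable) in `[0,1]`,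
positive normalization constants, initialization by the priors, the sum-product
update rules, and per-message normalization. -/
structure BPRun (FG : FactorGraph V 𝒥) (q : V → ℝ) where
  q_mem : ∀ v : V, q v ∈ Set.Icc (0 : ℝ) 1
  mVF : ℕ → V → 𝒥 → Bool → ℝ
  mFV : ℕ → 𝒥 → V → Bool → ℝ
  CFV : ℕ → 𝒥 → V → ℝ
  CVF : ℕ → V → 𝒥 → ℝ
  CFV_pos : ∀ n J v, v ∈ FG.nbhd J → 0 < CFV n J v
  CVF_pos : ∀ n v J, v ∈ FG.nbhd J → 0 < CVF n v J
  mVF_mem : ∀ n v J x, v ∈ FG.nbhd J → mVF n v J x ∈ Set.Icc (0 : ℝ) 1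
  mFV_mem : ∀ n J v x, v ∈ FG.nbhd J → mFV n J v x ∈ Set.Icc (0 : ℝ) 1
  mVF_init : ∀ v J, v ∈ FG.nbhd J →
    mVF 0 v J false = q v ∧ mVF 0 v J true = 1 - q v
  mFV_eq : ∀ n : ℕ, ∀ J v, ∀ hv : v ∈ FG.nbhd J, ∀ x : Bool,
    mFV (n + 1) J v x = CFV (n + 1) J v *
      ∑ z : {y // y ∈ FG.nbhd J} → Bool,
        (if z ⟨v, hv⟩ = x ∧ FG.g J z = true then
          ∏ y ∈ ((FG.nbhd J).erase v).attach,
            mVF n y.1 J (z ⟨y.1, Finset.mem_of_mem_erase y.2⟩)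
        else 0)
  mVF_eq : ∀ n : ℕ, ∀ v J, v ∈ FG.nbhd J → ∀ x : Bool,
    mVF (n + 1) v J x = CVF (n + 1) v J * prior q v x *
      ∏ I ∈ (FG.Jset v).erase J, mFV (n + 1) I v x
  mVF_norm : ∀ n v J, v ∈ FG.nbhd J → mVF n v J false + mVF n v J true = 1
  mFV_norm : ∀ n J v, v ∈ FG.nbhd J →
    mFV (n + 1) J v false + mFV (n + 1) J v true = 1

/-- Marginals: `r^{(n)}_v(x) = P_v(x) · ∏_{J ∈ 𝒥_v} m^{(n)}_{J→v}(x)`. -/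
noncomputable def marginal (FG : FactorGraph V 𝒥) {q : V → ℝ} (R : BPRun FG q)
    (n : ℕ) (v : V) (x : Bool) : ℝ :=
  prior q v x * ∏ J ∈ FG.Jset v, R.mFV n J v x

/-- The priors satisfy the sufficient initialization for `x`:
`q_v > 1 - ε_v` if `x_v = 0` and `q_v < ε_v` if `x_v = 1`. -/
def SuffInit (FG : FactorGraph V 𝒥) (q : V → ℝ) (x : V → Bool) : Prop :=
  ∀ v : V, (x v = false → 1 - FG.eps v < q v) ∧ (x v = true → q v < FG.eps v)

/-- **Lemma 1** (correct decision after one iteration): if `x*` is a valid solution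
and the priors satisfy the sufficient initialization for `x*`, then after the first
iteration the marginals satisfy `r^{(1)}_v(x*_v) > r^{(1)}_v(1 - x*_v)` for every
variable `v`; i.e., the BP decision after one iteration equals `x*_v`. -/
theorem bp_first_iteration_correct
    {V 𝒥 : Type} [Fintype V] [DecidableEq V] [Fintype 𝒥] [DecidableEq 𝒥]
    (FG : FactorGraph V 𝒥) (q : V → ℝ) (R : BPRun FG q)
    (xstar : V → Bool) (hvalid : FG.ValidSolution xstar)
    (hinit : SuffInit FG q xstar) :
    ∀ v : V,
      marginal FG R 1 v (xstar v) > marginal FG R 1 v (!xstar v) ∧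
      (if marginal FG R 1 v false ≤ marginal FG R 1 v true then true else false)
        = xstar v := by
  classical
  -- κ_w ≥ 1 for every w, since a valid solution exists
  have hkap : ∀ w : V, 1 ≤ FG.kappa w := by
    intro w
    obtain ⟨J, hJ⟩ := FG.facs_nonempty w
    have hJm : J ∈ FG.Jset w := by simp [FactorGraph.Jset, hJ]
    have h1 : 1 ≤ ((univ : Finset ({y // y ∈ FG.nbhd J} → Bool)).filter
        fun z => FG.g J z = true).card :=
      Finset.card_pos.mpr ⟨FG.restrict xstar J, by simp [hvalid J]⟩
    unfold FactorGraph.kappa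
    exact le_trans h1 (Finset.le_sup (f := fun J : 𝒥 =>
      ((univ : Finset ({y // y ∈ FG.nbhd J} → Bool)).filter fun z => FG.g J z = true).card) hJm)
  have heps_pos : ∀ w : V, 0 < FG.eps w := by
    intro w
    have : (0:ℝ) ≤ (FG.kappa w : ℝ) ^ (FG.Jset w).card := by positivity
    unfold FactorGraph.eps
    positivity
  have hpow1 : ∀ w : V, (1:ℝ) ≤ (FG.kappa w : ℝ) ^ (FG.Jset w).card := by
    intro w
    apply one_le_pow₀
    exact_mod_cast hkap w
  have heps_half : ∀ w : V, FG.eps w ≤ 1/2 := by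
    intro w
    have h2 : (2:ℝ) ≤ 1 + (FG.kappa w : ℝ) ^ (FG.Jset w).card := by linarith [hpow1 w]
    unfold FactorGraph.eps
    exact one_div_le_one_div_of_le (by norm_num) h2
  -- dominance and positivity of initial messages at the correct value
  have hkey : ∀ (w : V) (J : 𝒥), w ∈ FG.nbhd J →
      (0 < R.mVF 0 w J (xstar w)) ∧ (∀ b : Bool, R.mVF 0 w J b ≤ R.mVF 0 w J (xstar w)) := by
    intro w J hw
    obtain ⟨h0, h1⟩ := R.mVF_init w J hw
    have heh := heps_half w
    cases hxw : xstar w with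
    | false =>
      have hq : 1 - FG.eps w < q w := (hinit w).1 hxw
      constructor
      · rw [h0]; linarith
      · intro b
        cases b with
        | false => simp
        | true => rw [h0, h1]; linarith
    | true =>
      have hq : q w < FG.eps w := (hinit w).2 hxw
      constructor
      · rw [h1]; linarith
      · intro b
        cases b with
        | false => rw [h0, h1]; linarith
        | true => simp
  intro v
  set K : ℝ := (FG.kappa v : ℝ) with hK
  have hK1 : (1:ℝ) ≤ K := by rw [hK]; exact_mod_cast hkap v
  -- per-factor bound
  have hfac : ∀ J ∈ FG.Jset v, 0 < R.mFV 1 J v (xstar v) ∧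
      R.mFV 1 J v (!xstar v) ≤ (K - 1) * R.mFV 1 J v (xstar v) := by
    intro J hJ
    have hv : v ∈ FG.nbhd J := by
      simpa [FactorGraph.Jset] using hJ
    set zs : {y // y ∈ FG.nbhd J} → Bool := FG.restrict xstar J with hzs
    set f : ({y // y ∈ FG.nbhd J} → Bool) → ℝ := fun z =>
      ∏ y ∈ ((FG.nbhd J).erase v).attach,
        R.mVF 0 y.1 J (z ⟨y.1, Finset.mem_of_mem_erase y.2⟩) with hf
    have hf0 : ∀ z, 0 ≤ f z := by
      intro z
      apply Finset.prod_nonneg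
      intro y _
      exact (R.mVF_mem 0 y.1 J _ (Finset.mem_of_mem_erase y.2)).1
    have hfle : ∀ z, f z ≤ f zs := by
      intro z
      apply Finset.prod_le_prod
      · intro y _
        exact (R.mVF_mem 0 y.1 J _ (Finset.mem_of_mem_erase y.2)).1
      · intro y _
        have : zs ⟨y.1, Finset.mem_of_mem_erase y.2⟩ = xstar y.1 := rfl
        rw [this]
        exact (hkey y.1 J (Finset.mem_of_mem_erase y.2)).2 _
    have hfs : 0 < f zs := by
      apply Finset.prod_pos
      intro y _
      have : zs ⟨y.1, Finset.mem_of_mem_erase y.2⟩ = xstar y.1 := rfl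
      rw [this]
      exact (hkey y.1 J (Finset.mem_of_mem_erase y.2)).1
    set S : Bool → ℝ := fun x =>
      ∑ z : {y // y ∈ FG.nbhd J} → Bool,
        (if z ⟨v, hv⟩ = x ∧ FG.g J z = true then f z else 0) with hS
    have hmFV : ∀ x : Bool, R.mFV 1 J v x = R.CFV 1 J v * S x := by
      intro x
      exact R.mFV_eq 0 J v hv x
    have hSnonneg : ∀ x, 0 ≤ S x := by
      intro x
      apply Finset.sum_nonneg
      intro z _
      split
      · exact hf0 z
      · exact le_refl 0
    -- S at correct value is at least f zs
    have hzsv : zs ⟨v, hv⟩ = xstar v := rfl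
    have hgzs : FG.g J zs = true := hvalid J
    have hScorrect : f zs ≤ S (xstar v) := by
      have := Finset.single_le_sum (f := fun z =>
          (if z ⟨v, hv⟩ = xstar v ∧ FG.g J z = true then f z else 0))
        (fun z _ => by split; exacts [hf0 z, le_refl 0])
        (Finset.mem_univ zs)
      simpa [hzsv, hgzs] using this
    -- S at wrong value bound
    set A : Finset ({y // y ∈ FG.nbhd J} → Bool) :=
      univ.filter fun z => z ⟨v, hv⟩ = !xstar v ∧ FG.g J z = true with hA
    have hSwrong_eq : S (!xstar v) = ∑ z ∈ A, f z := by
      rw [hS, hA, Finset.sum_filter]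
    have hcard : (A.card : ℝ) ≤ K - 1 := by
      set B : Finset ({y // y ∈ FG.nbhd J} → Bool) :=
        univ.filter fun z => FG.g J z = true with hB
      have hzsB : zs ∈ B := by simp [hB, hgzs]
      have hzsA : zs ∉ A := by
        simp [hA, hzsv]
      have hAB : A ⊆ B := by
        intro z hz
        simp only [hA, Finset.mem_filter] at hz
        simp [hB, hz.2.2]
      have hins : insert zs A ⊆ B := by
        intro z hz
        rcases Finset.mem_insert.mp hz with h | h
        · rw [h]; exact hzsB
        · exact hAB h
      have hcard1 : A.card + 1 ≤ B.card := by
        have h := Finset.card_le_card hins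
        rw [Finset.card_insert_of_notMem hzsA] at h
        omega
      have hBk : B.card ≤ FG.kappa v := by
        rw [hB]
        unfold FactorGraph.kappa
        exact Finset.le_sup (f := fun J : 𝒥 =>
          ((univ : Finset ({y // y ∈ FG.nbhd J} → Bool)).filter fun z => FG.g J z = true).card) hJ
      have : (A.card : ℝ) + 1 ≤ K := by
        rw [hK]
        exact_mod_cast le_trans hcard1 hBk
      linarith
    have hSwrong : S (!xstar v) ≤ (K - 1) * S (xstar v) := by
      have h1 : S (!xstar v) ≤ (A.card : ℝ) * f zs := by
        rw [hSwrong_eq]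
        calc ∑ z ∈ A, f z ≤ A.card • f zs :=
              Finset.sum_le_card_nsmul A f (f zs) (fun z _ => hfle z)
          _ = (A.card : ℝ) * f zs := nsmul_eq_mul _ _
      calc S (!xstar v) ≤ (A.card : ℝ) * f zs := h1
        _ ≤ (K - 1) * f zs := mul_le_mul_of_nonneg_right hcard (le_of_lt hfs)
        _ ≤ (K - 1) * S (xstar v) :=
            mul_le_mul_of_nonneg_left hScorrect (by linarith)
    have hC := R.CFV_pos 1 J v hv
    constructor
    · rw [hmFV]
      exact mul_pos hC (lt_of_lt_of_le hfs hScorrect)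
    · rw [hmFV, hmFV]
      calc R.CFV 1 J v * S (!xstar v) ≤ R.CFV 1 J v * ((K - 1) * S (xstar v)) :=
            mul_le_mul_of_nonneg_left hSwrong (le_of_lt hC)
        _ = (K - 1) * (R.CFV 1 J v * S (xstar v)) := by ring
  -- assemble
  set d : ℕ := (FG.Jset v).card with hd
  have hd1 : d ≠ 0 := by
    obtain ⟨J, hJ⟩ := FG.facs_nonempty v
    have : J ∈ FG.Jset v := by simp [FactorGraph.Jset, hJ]
    have := Finset.card_pos.mpr ⟨J, this⟩
    omega
  have hPc : ∏ J ∈ FG.Jset v, R.mFV 1 J v (xstar v) > 0 :=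
    Finset.prod_pos (fun J hJ => (hfac J hJ).1)
  have hPw : ∏ J ∈ FG.Jset v, R.mFV 1 J v (!xstar v) ≤
      (K - 1) ^ d * ∏ J ∈ FG.Jset v, R.mFV 1 J v (xstar v) := by
    calc ∏ J ∈ FG.Jset v, R.mFV 1 J v (!xstar v)
        ≤ ∏ J ∈ FG.Jset v, (K - 1) * R.mFV 1 J v (xstar v) := by
          apply Finset.prod_le_prod
          · intro J hJ
            have hv : v ∈ FG.nbhd J := by simpa [FactorGraph.Jset] using hJ
            exact (R.mFV_mem 1 J v _ hv).1
          · intro J hJ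
            exact (hfac J hJ).2
      _ = (K - 1) ^ d * ∏ J ∈ FG.Jset v, R.mFV 1 J v (xstar v) := by
          rw [Finset.prod_mul_distrib, Finset.prod_const, hd]
  have hPwnonneg : 0 ≤ ∏ J ∈ FG.Jset v, R.mFV 1 J v (!xstar v) := by
    apply Finset.prod_nonneg
    intro J hJ
    have hv : v ∈ FG.nbhd J := by simpa [FactorGraph.Jset] using hJ
    exact (R.mFV_mem 1 J v _ hv).1
  -- prior bounds
  have hqmem := R.q_mem v
  have hprior : prior q v (!xstar v) ≤ FG.eps v ∧ 1 - FG.eps v < prior q v (xstar v) := by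
    cases hxv : xstar v with
    | false =>
      have hq : 1 - FG.eps v < q v := (hinit v).1 hxv
      constructor
      · simp [prior]; linarith
      · simp [prior]; linarith
    | true =>
      have hq : q v < FG.eps v := (hinit v).2 hxv
      constructor
      · simp [prior]; linarith
      · simp [prior]; linarith
  have hpriorw0 : 0 ≤ prior q v (!xstar v) := by
    cases hxv : xstar v with
    | false => simp [prior]; linarith [hqmem.2]
    | true => simp [prior]; linarith [hqmem.1]
  set E : ℝ := FG.eps v with hE
  have hET : E * (1 + K ^ d) = 1 := by
    rw [hE, hK]
    unfold FactorGraph.eps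
    rw [← hd]
    field_simp
  have hKd1 : (1:ℝ) ≤ K ^ d := by rw [hK, hd]; exact hpow1 v
  have hpowlt : (K - 1) ^ d < K ^ d :=
    pow_lt_pow_left₀ (by linarith) (by linarith) hd1
  have hmain : marginal FG R 1 v (!xstar v) < marginal FG R 1 v (xstar v) := by
    unfold marginal
    calc prior q v (!xstar v) * ∏ J ∈ FG.Jset v, R.mFV 1 J v (!xstar v)
        ≤ E * ((K - 1) ^ d * ∏ J ∈ FG.Jset v, R.mFV 1 J v (xstar v)) :=
          mul_le_mul hprior.1 hPw hPwnonneg (le_of_lt (heps_pos v))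
      _ < E * (K ^ d * ∏ J ∈ FG.Jset v, R.mFV 1 J v (xstar v)) := by
          apply mul_lt_mul_of_pos_left _ (heps_pos v)
          exact mul_lt_mul_of_pos_right hpowlt hPc
      _ = (E * (1 + K ^ d) - E) * ∏ J ∈ FG.Jset v, R.mFV 1 J v (xstar v) := by ring
      _ = (1 - E) * ∏ J ∈ FG.Jset v, R.mFV 1 J v (xstar v) := by rw [hET]
      _ < prior q v (xstar v) * ∏ J ∈ FG.Jset v, R.mFV 1 J v (xstar v) :=
          mul_lt_mul_of_pos_right hprior.2 hPc
  refine ⟨hmain, ?_⟩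
  cases hxv : xstar v with
  | false =>
    rw [hxv] at hmain
    simp only [Bool.not_false] at hmain
    rw [if_neg (not_le.mpr hmain)]
  | true =>
    rw [hxv] at hmain
    simp only [Bool.not_true] at hmain
    rw [if_pos (le_of_lt hmain)]
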